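/- Let i be a nonnegative integer and let G be a group (Δ(G)+i)-edge-critical graph. Then the minimum degree satisfies δ(G) ≥ i + 2. -/

import Mathlib

open SimpleGraph

/-- `G` is `A`-colorable for the Abelian group `A`: for every "oriented weight" `f` on the
edges (encoded as an antisymmetric function on ordered pairs, which is equivalent to fixing an
orientation `D` of `E(G)` and a function `E(G) → A`), there is an `(A,f)`-coloring, i.e. a
vertex coloring `c : V → A` with `c u - c v ≠ f u v` for every edge oriented from `u` to `v`. -/
def IsGroupColorable {V : Type*} (G : SimpleGraph V) (A : Type) [AddCommGroup A] : Prop :=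
  ∀ f : V → V → A, (∀ u v, f v u = - f u v) →
    ∃ c : V → A, ∀ u v, G.Adj u v → c u - c v ≠ f u v

/-- The group chromatic number `χ_g(G)`: the least `m` such that `G` is `A`-colorable for
every Abelian group `A` of order at least `m`. -/
noncomputable def groupChromaticNumber {V : Type*} (G : SimpleGraph V) : ℕ :=
  sInf {m : ℕ | ∀ (A : Type) [AddCommGroup A] [Fintype A],
    m ≤ Fintype.card A → IsGroupColorable G A}

/-- `G` is group `k`-choosable: for every Abelian group `A` of order at least `k`, every
`k`-uniform list assignment `L`, and every antisymmetric edge weight `f` (i.e. an orientation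
together with a function `E(G) → A`), there is an `(A,L,f)`-coloring. -/
def IsGroupChoosable {V : Type*} (G : SimpleGraph V) (k : ℕ) : Prop :=
  ∀ (A : Type) [AddCommGroup A] [Fintype A], k ≤ Fintype.card A →
    ∀ L : V → Finset A, (∀ v, (L v).card = k) →
      ∀ f : V → V → A, (∀ u v, f v u = - f u v) →
        ∃ c : V → A, (∀ v, c v ∈ L v) ∧ ∀ u v, G.Adj u v → c u - c v ≠ f u v

/-- The group choice number `χ_gl(G)`: the least `k` such that `G` is group `k`-choosable. -/
noncomputable def groupChoiceNumber {V : Type*} (G : SimpleGraph V) : ℕ :=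
  sInf {k : ℕ | IsGroupChoosable G k}

/-- `G` is group `k`-edge-choosable iff its line graph is group `k`-choosable. -/
def IsGroupEdgeChoosable {V : Type*} (G : SimpleGraph V) (k : ℕ) : Prop :=
  IsGroupChoosable G.lineGraph k

/-- The group edge chromatic number `χ'_g(G) = χ_g(𝓛(G))`. -/
noncomputable def groupEdgeChromaticNumber {V : Type*} (G : SimpleGraph V) : ℕ :=
  groupChromaticNumber G.lineGraph

/-- The group edge choice number `χ'_gl(G) = χ_gl(𝓛(G))`. -/
noncomputable def groupEdgeChoiceNumber {V : Type*} (G : SimpleGraph V) : ℕ :=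
  groupChoiceNumber G.lineGraph

/-- `G` is a cycle (of some length `n ≥ 3`). -/
def IsCycleGraph {V : Type*} (G : SimpleGraph V) : Prop :=
  ∃ n : ℕ, 3 ≤ n ∧ Nonempty (G ≃g cycleGraph n)

/-- The maximum degree of a subgraph `H` of `G` (the degree of `v` in `H` is the
cardinality of its neighbor set in `H`). -/
noncomputable def subgraphMaxDegree {V : Type*} {G : SimpleGraph V} (H : G.Subgraph) : ℕ :=
  ⨆ v, (H.neighborSet v).ncard

/-- `G` is group `(Δ(G)+i)`-edge-critical: `χ'_gl(G) > Δ(G) + i`, but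
`χ'_gl(H) ≤ Δ(H) + i` for every proper subgraph `H ⊂ G`. -/
def IsGroupEdgeCritical {V : Type*} [Fintype V] (G : SimpleGraph V) [DecidableRel G.Adj]
    (i : ℕ) : Prop :=
  G.maxDegree + i < groupEdgeChoiceNumber G ∧
    ∀ H : G.Subgraph, H ≠ ⊤ → groupEdgeChoiceNumber H.coe ≤ subgraphMaxDegree H + i

universe u

private lemma aux_choosable_mono {V : Type u} {G : SimpleGraph V} {k k' : ℕ} (hkk : k ≤ k')
    (h : IsGroupChoosable G k) : IsGroupChoosable G k' := by
  intro A _ _ hA L hL f hf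
  have hsub : ∀ v, ∃ t ⊆ L v, t.card = k := fun v =>
    Finset.exists_subset_card_eq (by rw [hL v]; exact hkk)
  choose L' hL'sub hL'card using hsub
  obtain ⟨c, hc1, hc2⟩ := h A (hkk.trans hA) L' hL'card f hf
  exact ⟨c, fun v => hL'sub v (hc1 v), hc2⟩

private lemma aux_choosable_card : ∀ (n : ℕ) {W : Type u} [Fintype W] (G : SimpleGraph W),
    Fintype.card W ≤ n → IsGroupChoosable G n := by
  intro n
  induction n with
  | zero =>
    intro W _ G hcard A _ _ hA L hL f hf
    have hW : IsEmpty W := Fintype.card_eq_zero_iff.mp (Nat.le_antisymm hcard (Nat.zero_le _))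
    exact ⟨fun x => (hW.false x).elim, fun v => (hW.false v).elim, fun a b _ => (hW.false a).elim⟩
  | succ n ih =>
    intro W _ G hcard A _ _ hA L hL f hf
    classical
    by_cases hW : Nonempty W
    case neg =>
      have hW' : IsEmpty W := not_nonempty_iff.mp hW
      exact ⟨fun x => (hW'.false x).elim, fun v => (hW'.false v).elim,
        fun a b _ => (hW'.false a).elim⟩
    obtain ⟨w⟩ := hW
    have hWpos : 1 ≤ Fintype.card W := Fintype.card_pos_iff.mpr ⟨w⟩
    have hcard' : Fintype.card {x : W // x ≠ w} ≤ n := by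
      have h1 : Fintype.card {x : W // ¬(x = w)} =
          Fintype.card W - Fintype.card {x : W // x = w} := Fintype.card_subtype_compl _
      have h2 : Fintype.card {x : W // x = w} = 1 := Fintype.card_subtype_eq w
      have h3 : Fintype.card {x : W // x ≠ w} = Fintype.card {x : W // ¬(x = w)} := rfl
      omega
    set G' : SimpleGraph {x : W // x ≠ w} := SimpleGraph.comap Subtype.val G with hG'
    have hsub : ∀ x : {x : W // x ≠ w}, ∃ t ⊆ L x.val, t.card = n := fun x =>
      Finset.exists_subset_card_eq (by rw [hL x.val]; omega)
    choose L' hL'sub hL'card using hsub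
    obtain ⟨c', hc'mem, hc'adj⟩ := ih G' hcard' A (by omega) L' hL'card
      (fun x y => f x.val y.val) (fun x y => hf x.val y.val)
    set F : Finset A := Finset.univ.image (fun x : {x : W // x ≠ w} => c' x + f w x.val) with hF
    have hFcard : F.card < (L w).card := by
      have h5 := Finset.card_image_le (s := (Finset.univ : Finset {x : W // x ≠ w}))
        (f := fun x => c' x + f w x.val)
      rw [Finset.card_univ] at h5
      rw [hL w]
      have : F.card ≤ Fintype.card {x : W // x ≠ w} := h5
      omega
    have hzex : ∃ z, z ∈ L w ∧ z ∉ F := by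
      have h4 := Finset.le_card_sdiff F (L w)
      have h5 : 0 < (L w \ F).card := by omega
      obtain ⟨z, hz⟩ := Finset.card_pos.mp h5
      rw [Finset.mem_sdiff] at hz
      exact ⟨z, hz.1, hz.2⟩
    obtain ⟨z, hzL, hzF⟩ := hzex
    refine ⟨fun x => if h : x = w then z else c' ⟨x, h⟩, ?_, ?_⟩
    · intro x
      dsimp only
      by_cases h : x = w
      · rw [dif_pos h, h]; exact hzL
      · rw [dif_neg h]
        exact hL'sub ⟨x, h⟩ (hc'mem ⟨x, h⟩)
    · intro a b hab
      dsimp only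
      by_cases ha : a = w <;> by_cases hb : b = w
      · exact absurd (ha.trans hb.symm) hab.ne
      · rw [dif_pos ha, dif_neg hb, ha]
        intro heq
        apply hzF
        rw [hF]
        refine Finset.mem_image.mpr ⟨⟨b, hb⟩, Finset.mem_univ _, ?_⟩
        rw [← heq]; abel
      · rw [dif_neg ha, dif_pos hb, hb]
        intro heq
        apply hzF
        rw [hF]
        refine Finset.mem_image.mpr ⟨⟨a, ha⟩, Finset.mem_univ _, ?_⟩
        rw [hf w a] at heq
        have h7 : f w a = z - c' ⟨a, ha⟩ := by
          rw [← neg_neg (f w a), ← heq, neg_sub]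
        rw [h7]; abel
      · rw [dif_neg ha, dif_neg hb]
        exact hc'adj ⟨a, ha⟩ ⟨b, hb⟩ hab

private lemma aux_choosable_of_le {W : Type u} [Fintype W] {G : SimpleGraph W} {m : ℕ}
    (h : groupChoiceNumber G ≤ m) : IsGroupChoosable G m := by
  have hne : {k : ℕ | IsGroupChoosable G k}.Nonempty :=
    ⟨Fintype.card W, aux_choosable_card _ G le_rfl⟩
  exact aux_choosable_mono h (Nat.sInf_mem hne)

private lemma aux_transfer {V : Type*} {V' : Type*} {G : SimpleGraph V} {G' : SimpleGraph V'}
    (ψ : G.edgeSet ≃ G'.edgeSet)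
    (hψ : ∀ a b, G.lineGraph.Adj a b → G'.lineGraph.Adj (ψ a) (ψ b)) {k : ℕ}
    (h : IsGroupChoosable G'.lineGraph k) : IsGroupChoosable G.lineGraph k := by
  intro A _ _ hA L hL f hf
  obtain ⟨c', hc1, hc2⟩ := h A hA (fun e => L (ψ.symm e)) (fun e => hL _)
    (fun x y => f (ψ.symm x) (ψ.symm y)) (fun x y => hf _ _)
  refine ⟨fun e => c' (ψ e), fun e => by simpa using hc1 (ψ e), ?_⟩
  intro a b hab
  have h3 := hc2 (ψ a) (ψ b) (hψ a b hab)
  simpa using h3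

private lemma aux_subgraphMaxDegree_le {V : Type*} [Fintype V] [Nonempty V] {G : SimpleGraph V}
    [DecidableRel G.Adj] (H : G.Subgraph) : subgraphMaxDegree H ≤ G.maxDegree := by
  refine ciSup_le fun x => ?_
  have h1 : (H.neighborSet x).ncard ≤ (G.neighborSet x).ncard :=
    Set.ncard_le_ncard (H.neighborSet_subset x) (G.neighborSet x).toFinite
  have h2 : (G.neighborSet x).ncard = G.degree x := by
    rw [Set.ncard_eq_toFinset_card', ← neighborFinset_def]
    rfl
  exact (h1.trans_eq h2).trans (G.degree_le_maxDegree x)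


/-- If `G` is group `(Δ(G)+i)`-edge-critical, then `δ(G) ≥ i + 2`. -/
theorem minDegree_of_isGroupEdgeCritical {V : Type*} [Fintype V]
    (G : SimpleGraph V) [DecidableRel G.Adj] (i : ℕ) (hG : IsGroupEdgeCritical G i) :
    i + 2 ≤ G.minDegree := by
  classical
  by_contra hlt
  push_neg at hlt
  obtain ⟨h1, h2⟩ := hG
  suffices hch : IsGroupChoosable G.lineGraph (G.maxDegree + i) by
    have hle : groupEdgeChoiceNumber G ≤ G.maxDegree + i := Nat.sInf_le hch
    omega
  cases isEmpty_or_nonempty V with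
  | inl hV =>
    intro A _ _ hA L hL f hf
    have hE : IsEmpty G.edgeSet := by
      constructor
      rintro ⟨e, he⟩
      revert he
      refine Sym2.ind (fun x y => ?_) e
      exact fun _ => hV.false x
    exact ⟨fun x => (hE.false x).elim, fun x => (hE.false x).elim, fun a b _ => (hE.false a).elim⟩
  | inr hV =>
    obtain ⟨v, hv⟩ := G.exists_minimal_degree_vertex
    rw [hv] at hlt
    by_cases hdeg : G.degree v = 0
    · -- `v` is an isolated vertex; delete it.
      have hno : ∀ w, ¬ G.Adj v w := by
        intro w hw
        have hmem : w ∈ G.neighborFinset v := (G.mem_neighborFinset v w).mpr hw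
        rw [Finset.card_eq_zero.mp hdeg] at hmem
        exact absurd hmem (Finset.notMem_empty w)
      set H : G.Subgraph :=
        { verts := {x : V | x ≠ v}
          Adj := G.Adj
          adj_sub := id
          edge_vert := fun {a b} hab hav => hno b (hav ▸ hab)
          symm := ⟨fun a b (hab : G.Adj a b) => hab.symm⟩ } with hH
      have hHne : H ≠ ⊤ := by
        intro h
        have hmem : v ∈ H.verts := by rw [h, SimpleGraph.Subgraph.verts_top]; trivial
        exact hmem rfl
      have hkey := h2 H hHne
      have hmax := aux_subgraphMaxDegree_le H
      letI : Fintype ↥H.verts := Fintype.ofFinite _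
      letI : Fintype ↥(H.coe.edgeSet) := Fintype.ofFinite _
      have hch' : IsGroupChoosable H.coe.lineGraph (G.maxDegree + i) :=
        aux_choosable_of_le (hkey.trans (by omega))
      have hbij : Function.Bijective (SimpleGraph.Hom.mapEdgeSet H.hom) := by
        constructor
        · exact SimpleGraph.Hom.mapEdgeSet.injective H.hom SimpleGraph.Subgraph.hom_injective
        · rintro ⟨e, he⟩
          revert he
          refine Sym2.ind (fun x y => ?_) e
          intro he
          rw [SimpleGraph.mem_edgeSet] at he
          have hx : x ≠ v := fun h => hno y (h ▸ he)
          have hy : y ≠ v := fun h => hno x (h ▸ he.symm)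
          refine ⟨⟨s((⟨x, hx⟩ : ↥H.verts), (⟨y, hy⟩ : ↥H.verts)), ?_⟩, ?_⟩
          · rw [SimpleGraph.mem_edgeSet]
            exact he
          · apply Subtype.ext
            rfl
      set φ : H.coe.edgeSet ≃ G.edgeSet := Equiv.ofBijective _ hbij with hφ
      have hφval : ∀ e' : H.coe.edgeSet,
          (φ e' : Sym2 V) = Sym2.map Subtype.val (e' : Sym2 ↥H.verts) := fun e' => rfl
      refine aux_transfer φ.symm ?_ hch'
      intro a b hab
      rw [SimpleGraph.lineGraph_adj_iff_exists] at hab ⊢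
      obtain ⟨hne', w, hw1, hw2⟩ := hab
      refine ⟨φ.symm.injective.ne hne', ?_⟩
      have ha : (a : Sym2 V) = Sym2.map Subtype.val ((φ.symm a : H.coe.edgeSet) : Sym2 ↥H.verts) := by
        conv_lhs => rw [← φ.apply_symm_apply a]
        exact hφval _
      have hb : (b : Sym2 V) = Sym2.map Subtype.val ((φ.symm b : H.coe.edgeSet) : Sym2 ↥H.verts) := by
        conv_lhs => rw [← φ.apply_symm_apply b]
        exact hφval _
      rw [ha] at hw1
      rw [hb] at hw2
      obtain ⟨w1, hw1', hw1e⟩ := Sym2.mem_map.mp hw1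
      obtain ⟨w2, hw2', hw2e⟩ := Sym2.mem_map.mp hw2
      refine ⟨w1, hw1', ?_⟩
      have hw12 : w1 = w2 := Subtype.ext (hw1e.trans hw2e.symm)
      rw [hw12]
      exact hw2'
    · -- `v` has positive degree at most `i + 1`; delete an edge at `v`.
      have hdpos : 0 < G.degree v := Nat.pos_of_ne_zero hdeg
      obtain ⟨u, hu⟩ := Finset.card_pos.mp hdpos
      rw [SimpleGraph.mem_neighborFinset] at hu
      have heG : s(v, u) ∈ G.edgeSet := G.mem_edgeSet.mpr hu
      set Eb : G.edgeSet := ⟨s(v, u), heG⟩ with hEb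
      set H : G.Subgraph := (⊤ : G.Subgraph).deleteEdges {s(v, u)} with hH
      have hHadj : ∀ x y, H.Adj x y ↔ G.Adj x y ∧ ¬(s(x, y) = s(v, u)) := by
        intro x y
        rw [hH]
        simp [SimpleGraph.Subgraph.deleteEdges_adj]
      have hHne : H ≠ ⊤ := by
        intro h
        have h3 : H.Adj v u := by rw [h]; exact SimpleGraph.Subgraph.top_adj.mpr hu
        rw [hHadj] at h3
        exact h3.2 rfl
      have hkey := h2 H hHne
      have hmax := aux_subgraphMaxDegree_le H
      letI : Fintype ↥H.verts := Fintype.ofFinite _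
      letI : Fintype ↥(H.coe.edgeSet) := Fintype.ofFinite _
      have hch' : IsGroupChoosable H.coe.lineGraph (G.maxDegree + i) :=
        aux_choosable_of_le (hkey.trans (by omega))
      intro A _ _ hA L hL f hf
      have hιmem : ∀ x : V, x ∈ H.verts := by
        intro x
        rw [hH, SimpleGraph.Subgraph.deleteEdges_verts, SimpleGraph.Subgraph.verts_top]
        trivial
      set ι : V → ↥H.verts := fun x => ⟨x, hιmem x⟩ with hι
      have hcomp : ∀ a : Sym2 V, Sym2.map Subtype.val (Sym2.map ι a) = a := by
        intro a
        rw [Sym2.map_map]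
        exact congrFun Sym2.map_id a
      have hψmem : ∀ a : Sym2 V, a ∈ G.edgeSet → a ≠ s(v, u) → Sym2.map ι a ∈ H.coe.edgeSet := by
        intro a
        refine Sym2.ind (fun x y => ?_) a
        intro hmem hne'
        rw [SimpleGraph.mem_edgeSet] at hmem
        rw [Sym2.map_pair_eq, SimpleGraph.mem_edgeSet]
        show H.Adj x y
        rw [hHadj]
        exact ⟨hmem, hne'⟩
      set φ : H.coe.edgeSet → G.edgeSet := SimpleGraph.Hom.mapEdgeSet H.hom with hφ
      have hφval : ∀ e' : H.coe.edgeSet,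
          (φ e' : Sym2 V) = Sym2.map Subtype.val (e' : Sym2 ↥H.verts) := fun e' => rfl
      obtain ⟨c', hc'mem, hc'adj⟩ := hch' A hA (fun e' => L (φ e')) (fun e' => hL _)
        (fun x y => f (φ x) (φ y)) (fun x y => hf _ _)
      set ψ : (a : G.edgeSet) → a ≠ Eb → H.coe.edgeSet :=
        fun a h => ⟨Sym2.map ι a.val, hψmem a.val a.2 (fun h' => h (Subtype.ext h'))⟩ with hψ
      have hφψ : ∀ (a : G.edgeSet) (h : a ≠ Eb), φ (ψ a h) = a := by
        intro a h
        apply Subtype.ext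
        rw [hφval]
        exact hcomp a.val
      set g : G.edgeSet → A := fun a => if h : a = Eb then 0 else c' (ψ a h) with hg
      set F : Finset A := (G.lineGraph.neighborFinset Eb).image (fun a => g a + f Eb a) with hF
      have hFcard : F.card < (L Eb).card := by
        have hb1 : F.card ≤ (G.lineGraph.neighborFinset Eb).card := Finset.card_image_le
        have hb2 : (G.lineGraph.neighborFinset Eb).card ≤
            (((G.incidenceFinset v).erase s(v, u)) ∪ ((G.incidenceFinset u).erase s(v, u))).card := by
          apply Finset.card_le_card_of_injOn Subtype.val
          · intro a ha
            rw [Finset.mem_coe, SimpleGraph.mem_neighborFinset, SimpleGraph.lineGraph_adj_iff_exists] at ha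
            obtain ⟨hne', w, hw1, hw2⟩ := ha
            have haE : (a : Sym2 V) ≠ s(v, u) := fun h => hne' (Subtype.ext h).symm
            rw [Finset.mem_coe, Finset.mem_union]
            have hw1' : w = v ∨ w = u := Sym2.mem_iff.mp hw1
            cases hw1' with
            | inl h =>
              left
              rw [Finset.mem_erase, SimpleGraph.mem_incidenceFinset]
              exact ⟨haE, a.2, h ▸ hw2⟩
            | inr h =>
              right
              rw [Finset.mem_erase, SimpleGraph.mem_incidenceFinset]
              exact ⟨haE, a.2, h ▸ hw2⟩
          · intro a _ b _ hval
            exact Subtype.ext hval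
        have hb3 : ((G.incidenceFinset v).erase s(v, u)).card = G.degree v - 1 := by
          rw [Finset.card_erase_of_mem, SimpleGraph.card_incidenceFinset_eq_degree]
          rw [SimpleGraph.mem_incidenceFinset]
          exact ⟨heG, Sym2.mem_mk_left v u⟩
        have hb4 : ((G.incidenceFinset u).erase s(v, u)).card = G.degree u - 1 := by
          rw [Finset.card_erase_of_mem, SimpleGraph.card_incidenceFinset_eq_degree]
          rw [SimpleGraph.mem_incidenceFinset]
          exact ⟨heG, Sym2.mem_mk_right v u⟩
        have hunion := Finset.card_union_le ((G.incidenceFinset v).erase s(v, u))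
          ((G.incidenceFinset u).erase s(v, u))
        have hdu : G.degree u ≤ G.maxDegree := G.degree_le_maxDegree u
        have hdu1 : 0 < G.degree u := (G.degree_pos_iff_exists_adj u).mpr ⟨v, hu.symm⟩
        rw [hL Eb]
        omega
      have hzex : ∃ z, z ∈ L Eb ∧ z ∉ F := by
        have h4 := Finset.le_card_sdiff F (L Eb)
        have h5 : 0 < (L Eb \ F).card := by omega
        obtain ⟨z, hz⟩ := Finset.card_pos.mp h5
        rw [Finset.mem_sdiff] at hz
        exact ⟨z, hz.1, hz.2⟩
      obtain ⟨z, hzL, hzF⟩ := hzex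
      have hexport : ∀ (x : G.edgeSet) (hx : x ≠ Eb), G.lineGraph.Adj Eb x →
          z ≠ c' (ψ x hx) + f Eb x := by
        intro x hx hadj heq
        apply hzF
        rw [hF]
        refine Finset.mem_image.mpr ⟨x, ?_, ?_⟩
        · rw [SimpleGraph.mem_neighborFinset]; exact hadj
        · rw [hg]
          dsimp only
          rw [dif_neg hx]
          exact heq.symm
      refine ⟨fun a => if h : a = Eb then z else c' (ψ a h), ?_, ?_⟩
      · intro a
        dsimp only
        by_cases h : a = Eb
        · rw [dif_pos h, h]; exact hzL
        · rw [dif_neg h]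
          have h6 := hc'mem (ψ a h)
          rw [hφψ a h] at h6
          exact h6
      · intro a b hab
        dsimp only
        by_cases ha : a = Eb <;> by_cases hb : b = Eb
        · exact absurd (ha.trans hb.symm) hab.ne
        · rw [dif_pos ha, dif_neg hb, ha]
          intro heq
          refine hexport b hb (ha ▸ hab) ?_
          rw [← heq]; abel
        · rw [dif_neg ha, dif_pos hb, hb]
          intro heq
          refine hexport a ha (hb ▸ hab.symm) ?_
          rw [hf Eb a] at heq
          have h7 : f Eb a = z - c' (ψ a ha) := by
            rw [← neg_neg (f Eb a), ← heq, neg_sub]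
          rw [h7]; abel
        · rw [dif_neg ha, dif_neg hb]
          have hAdj' : H.coe.lineGraph.Adj (ψ a ha) (ψ b hb) := by
            rw [SimpleGraph.lineGraph_adj_iff_exists] at hab ⊢
            obtain ⟨hne', w, hw1, hw2⟩ := hab
            refine ⟨?_, ι w, ?_, ?_⟩
            · intro hψeq
              apply hne'
              have h8 := congrArg φ hψeq
              rw [hφψ a ha, hφψ b hb] at h8
              exact h8
            · exact Sym2.mem_map.mpr ⟨w, hw1, rfl⟩
            · exact Sym2.mem_map.mpr ⟨w, hw2, rfl⟩
          have h9 := hc'adj (ψ a ha) (ψ b hb) hAdj'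
          rw [hφψ a ha, hφψ b hb] at h9
          exact h9
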